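/- Let F : Type u ⥤ Type u be a functor that preserves weak pullbacks. Then for all types X, Y, X', Y' and all functions f : X → X', g : Y → Y', the square with top edge λ_{X,Y} = ⟨F.map Prod.fst, F.map Prod.snd⟩ : F(X × Y) → F X × F Y, left edge F.map (Prod.map f g) : F(X × Y) → F(X' × Y'), bottom edge λ_{X',Y'} : F(X' × Y') → F X' × F Y', and right edge Prod.map (F.map f) (F.map g) commutes and is a weak pullback: for every u : F(X' × Y') and every pair (t₁, t₂) : F X × F Y with λ_{X',Y'} u = (F.map f t₁, F.map g t₂), there exists w : F(X × Y) with F.map (Prod.map f g) w = u, F.map Prod.fst w = t₁ and F.map Prod.snd w = t₂. -/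

import Mathlib

open CategoryTheory

universe u

/-- A commuting square of functions that is a weak pullback. -/
def IsWeakPullback {P X Y Z : Type u} (p : P → X) (q : P → Y)
    (f : X → Z) (g : Y → Z) : Prop :=
  (∀ w, f (p w) = g (q w)) ∧
  ∀ x y, f x = g y → ∃ w, p w = x ∧ q w = y

/-- A functor on types preserves weak pullbacks if it maps weak pullback
squares to weak pullback squares. -/
def PreservesWeakPullbacks (F : Type u ⥤ Type u) : Prop :=
  ∀ {P X Y Z : Type u} (p : P → X) (q : P → Y) (f : X → Z) (g : Y → Z),
    IsWeakPullback p q f g →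
    IsWeakPullback (F.map (TypeCat.ofHom p)) (F.map (TypeCat.ofHom q)) (F.map (TypeCat.ofHom f)) (F.map (TypeCat.ofHom g))

/-- If `F` preserves weak pullbacks, then the square with top edge
`λ_{X,Y} = ⟨F.map Prod.fst, F.map Prod.snd⟩`, left edge `F.map (Prod.map f g)`,
bottom edge `λ_{X',Y'}` and right edge `Prod.map (F.map f) (F.map g)` commutes
and is a weak pullback. -/
theorem lambda_square_weakPullback (F : Type u ⥤ Type u)
    (hF : PreservesWeakPullbacks F) {X Y X' Y' : Type u}
    (f : X → X') (g : Y → Y') :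
    (∀ w : F.obj (X × Y),
      (F.map (TypeCat.ofHom Prod.fst) (F.map (TypeCat.ofHom (Prod.map f g)) w),
        F.map (TypeCat.ofHom Prod.snd) (F.map (TypeCat.ofHom (Prod.map f g)) w)) =
      Prod.map (F.map (TypeCat.ofHom f)) (F.map (TypeCat.ofHom g)) (F.map (TypeCat.ofHom Prod.fst) w, F.map (TypeCat.ofHom Prod.snd) w)) ∧
    ∀ (u : F.obj (X' × Y')) (t₁ : F.obj X) (t₂ : F.obj Y),
      (F.map (TypeCat.ofHom Prod.fst) u, F.map (TypeCat.ofHom Prod.snd) u) = (F.map (TypeCat.ofHom f) t₁, F.map (TypeCat.ofHom g) t₂) →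
      ∃ w : F.obj (X × Y),
        F.map (TypeCat.ofHom (Prod.map f g)) w = u ∧
        F.map (TypeCat.ofHom Prod.fst) w = t₁ ∧ F.map (TypeCat.ofHom Prod.snd) w = t₂ := by
  have key : ∀ {A B C D : Type u} (a : A → B) (b : B → C) (c : A → D) (d : D → C),
      (∀ x, b (a x) = d (c x)) → ∀ (z : F.obj A), F.map (TypeCat.ofHom b) (F.map (TypeCat.ofHom a) z) = F.map (TypeCat.ofHom d) (F.map (TypeCat.ofHom c) z) := by
    intro A B C D a b c d h z
    rw [← FunctorToTypes.map_comp_apply, ← FunctorToTypes.map_comp_apply]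
    exact congrArg (fun k => F.map k z) (congrArg TypeCat.ofHom (funext h : (b ∘ a) = d ∘ c) : (TypeCat.ofHom a ≫ TypeCat.ofHom b) = TypeCat.ofHom c ≫ TypeCat.ofHom d)
  constructor
  · intro w
    simp only [Prod.map_apply, Prod.mk.injEq]
    constructor
    · exact key (Prod.map f g) Prod.fst Prod.fst f (fun x => rfl) w
    · exact key (Prod.map f g) Prod.snd Prod.snd g (fun x => rfl) w
  · intro u t₁ t₂ h
    obtain ⟨h1, h2⟩ := Prod.mk.injEq .. ▸ h
    -- first weak pullback: X × Y' over X' with fst and f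
    have sq1 : IsWeakPullback (p := Prod.map f (id : Y' → Y')) (q := (Prod.fst : X × Y' → X))
        (f := (Prod.fst : X' × Y' → X')) (g := f) := by
      refine ⟨fun w => rfl, fun x y hxy => ⟨(y, x.2), ?_, rfl⟩⟩
      exact Prod.ext hxy.symm rfl
    obtain ⟨v, hv1, hv2⟩ := (hF _ _ _ _ sq1).2 u t₁ h1
    -- second weak pullback: X × Y over Y' via (X × Y') with snd and g
    have sq2 : IsWeakPullback (p := Prod.map (id : X → X) g) (q := (Prod.snd : X × Y → Y))
        (f := (Prod.snd : X × Y' → Y')) (g := g) := by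
      refine ⟨fun w => rfl, fun x y hxy => ⟨(x.1, y), ?_, rfl⟩⟩
      exact Prod.ext rfl hxy.symm
    have key1 : ∀ {A B C : Type u} (a : A → B) (b : B → C) (c : A → C),
        (∀ x, b (a x) = c x) → ∀ z, F.map (TypeCat.ofHom b) (F.map (TypeCat.ofHom a) z) = F.map (TypeCat.ofHom c) z := by
      intro A B C a b c h z
      rw [← FunctorToTypes.map_comp_apply]
      exact congrArg (fun k => F.map k z) (congrArg TypeCat.ofHom (funext h : (b ∘ a) = c) : (TypeCat.ofHom a ≫ TypeCat.ofHom b) = TypeCat.ofHom c)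
    have hvsnd : F.map (TypeCat.ofHom Prod.snd) v = F.map (TypeCat.ofHom g) t₂ := by
      rw [← hv1, key1 (Prod.map f (id : Y' → Y')) Prod.snd Prod.snd (fun x => rfl) v] at h2
      exact h2
    obtain ⟨w, hw1, hw2⟩ := (hF _ _ _ _ sq2).2 v t₂ hvsnd
    refine ⟨w, ?_, ?_, hw2⟩
    · have := key1 (Prod.map (id : X → X) g) (Prod.map f (id : Y' → Y'))
        (Prod.map f g) (fun x => rfl) w
      rw [← this, hw1, hv1]
    · have := key1 (Prod.map (id : X → X) g) Prod.fst Prod.fst (fun x => rfl) w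
      rw [← this, hw1]
      exact hv2
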